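/- arXiv:1912.07526 — 3 statements merged into one kernel-verified Lean document; each statement's English description precedes it below -/
import Mathlib

section
/- Let B be symmetric positive semi-definite, α > 0 with αρ(B) < 1, and T ≥ 1 an integer. Define C = Σ_{t=0}^{T−1}(I − αB)^t and M = C^{-1}(I − αB)^T. Then M is symmetric positive definite and its eigenvalues satisfy (1 − αρ(B))^T / (Σ_{t=0}^{T−1}(1 − αρ(B))^t) ≤ λ ≤ 1/T for every eigenvalue λ of M. -/
open Matrix Finset

private lemma mono_aux (T : ℕ) (hT : 1 ≤ T) {x y : ℝ} (hx : 0 < x) (hxy : x ≤ y) :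
    x ^ T / (∑ t ∈ Finset.range T, x ^ t) ≤ y ^ T / (∑ t ∈ Finset.range T, y ^ t) := by
  have hy : 0 < y := lt_of_lt_of_le hx hxy
  have hsx : 0 < ∑ t ∈ Finset.range T, x ^ t :=
    Finset.sum_pos (fun t _ => pow_pos hx t) (by simp [Finset.nonempty_range_iff]; omega)
  have hsy : 0 < ∑ t ∈ Finset.range T, y ^ t :=
    Finset.sum_pos (fun t _ => pow_pos hy t) (by simp [Finset.nonempty_range_iff]; omega)
  rw [div_le_div_iff₀ hsx hsy, Finset.mul_sum, Finset.mul_sum]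
  refine Finset.sum_le_sum fun t ht => ?_
  have htT : t ≤ T := (Finset.mem_range.mp ht).le
  have h1 : x ^ T = x ^ t * x ^ (T - t) := by rw [← pow_add]; congr 1; omega
  have h2 : y ^ T = y ^ t * y ^ (T - t) := by rw [← pow_add]; congr 1; omega
  rw [h1, h2]
  have hpow : x ^ (T - t) ≤ y ^ (T - t) := pow_le_pow_left₀ hx.le hxy (T - t)
  calc x ^ t * x ^ (T - t) * y ^ t ≤ x ^ t * y ^ (T - t) * y ^ t :=
        mul_le_mul_of_nonneg_right (mul_le_mul_of_nonneg_left hpow (pow_nonneg hx.le t))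
          (pow_nonneg hy.le t)
    _ = y ^ t * y ^ (T - t) * x ^ t := by ring

private lemma s4_conj_mul {n : ℕ} {U : Matrix (Fin n) (Fin n) ℝ} (hU : star U * U = 1)
    (φ ψ : Fin n → ℝ) :
    (U * diagonal φ * star U) * (U * diagonal ψ * star U)
      = U * diagonal (fun i => φ i * ψ i) * star U := by
  have : U * diagonal φ * star U * (U * diagonal ψ * star U)
      = U * (diagonal φ * (star U * U) * diagonal ψ) * star U := by
    simp only [Matrix.mul_assoc]
  rw [this, hU, mul_one, diagonal_mul_diagonal]

private lemma s4_conj_posDef {n : ℕ} {U : Matrix (Fin n) (Fin n) ℝ}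
    (hU : star U * U = 1) (hU' : U * star U = 1) {f : Fin n → ℝ} (hf : ∀ i, 0 < f i) :
    (U * diagonal f * star U).PosDef := by
  rw [posDef_iff_dotProduct_mulVec]
  constructor
  · show _ = _
    rw [star_eq_conjTranspose, conjTranspose_mul, conjTranspose_mul,
      conjTranspose_conjTranspose, diagonal_conjTranspose]
    simp [Matrix.mul_assoc, Pi.star_def]
  · intro x hx
    set w := star U *ᵥ x with hw
    have hwx : U *ᵥ w = x := by
      rw [hw, mulVec_mulVec, hU', one_mulVec]
    have hwne : w ≠ 0 := by
      intro h
      apply hx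
      rw [← hwx, h, mulVec_zero]
    have key : star x ⬝ᵥ (U * diagonal f * star U) *ᵥ x
        = star w ⬝ᵥ diagonal f *ᵥ w := by
      have hsw : star w = star x ᵥ* U := by
        rw [hw, star_mulVec, star_eq_conjTranspose, conjTranspose_conjTranspose]
      rw [← mulVec_mulVec, ← mulVec_mulVec, dotProduct_mulVec (star x), ← hsw]
    rw [key]
    exact (Matrix.PosDef.diagonal hf).dotProduct_mulVec_pos hwne

theorem stmt_4 (n : ℕ) (B : Matrix (Fin n) (Fin n) ℝ) (hB : B.PosSemidef)
    (ρ : ℝ) (hρ : IsGreatest {μ : ℝ | ∃ v : Fin n → ℝ, v ≠ 0 ∧ B.mulVec v = μ • v} ρ)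
    (α : ℝ) (hα : 0 < α) (hαρ : α * ρ < 1) (T : ℕ) (hT : 1 ≤ T)
    (C M : Matrix (Fin n) (Fin n) ℝ)
    (hC : C = ∑ t ∈ Finset.range T, ((1 : Matrix (Fin n) (Fin n) ℝ) - α • B) ^ t)
    (hM : M = C⁻¹ * ((1 : Matrix (Fin n) (Fin n) ℝ) - α • B) ^ T) :
    M.PosDef ∧
    ∀ (lam : ℝ) (v : Fin n → ℝ), v ≠ 0 → M.mulVec v = lam • v →
      (1 - α * ρ) ^ T / (∑ t ∈ Finset.range T, (1 - α * ρ) ^ t) ≤ lam ∧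
      lam ≤ 1 / (T : ℝ) := by
  have hH : B.IsHermitian := hB.1
  set U : Matrix (Fin n) (Fin n) ℝ := (hH.eigenvectorUnitary : Matrix (Fin n) (Fin n) ℝ) with hUdef
  have hU : star U * U = 1 := Matrix.mem_unitaryGroup_iff'.mp hH.eigenvectorUnitary.2
  have hU' : U * star U = 1 := Matrix.mem_unitaryGroup_iff.mp hH.eigenvectorUnitary.2
  set d : Fin n → ℝ := hH.eigenvalues with hddef
  -- spectral theorem
  have hBspec : B = U * diagonal d * star U := by
    have := hH.spectral_theorem
    rwa [show (RCLike.ofReal ∘ hH.eigenvalues : Fin n → ℝ) = d by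
      funext i; simp [hddef]] at this
  -- eigenvalue bounds for B
  have hd0 : ∀ i, 0 ≤ d i := fun i => hB.eigenvalues_nonneg i
  have hdρ : ∀ i, d i ≤ ρ := by
    intro i
    apply hρ.2
    exact ⟨_, (WithLp.ofLp_eq_zero 2).ne.2 <| hH.eigenvectorBasis.orthonormal.ne_zero i, hH.mulVec_eigenvectorBasis i⟩
  set φ : Fin n → ℝ := fun i => 1 - α * d i with hφdef
  have hφpos : ∀ i, 0 < φ i := fun i => by
    have := hdρ i; have := hd0 i
    have : α * d i ≤ α * ρ := by nlinarith
    simp only [hφdef]; linarith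
  have hφle1 : ∀ i, φ i ≤ 1 := fun i => by
    have := hd0 i; simp only [hφdef]; nlinarith
  have hx0 : (0 : ℝ) < 1 - α * ρ := by linarith
  -- the conjugation identities
  have hA : (1 : Matrix (Fin n) (Fin n) ℝ) - α • B = U * diagonal φ * star U := by
    have h1 : (1 : Matrix (Fin n) (Fin n) ℝ) = U * diagonal (fun _ => (1:ℝ)) * star U := by
      rw [diagonal_one, mul_one, hU']
    have hsd : (α • diagonal d : Matrix (Fin n) (Fin n) ℝ) = diagonal (fun i => α * d i) := by
      rw [← diagonal_smul]; rfl
    have h2 : α • B = U * diagonal (fun i => α * d i) * star U := by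
      rw [hBspec, ← hsd, mul_smul_comm, smul_mul_assoc]
    rw [h1, h2, ← Matrix.sub_mul, ← Matrix.mul_sub, diagonal_sub]
  have hApow : ∀ k : ℕ, ((1 : Matrix (Fin n) (Fin n) ℝ) - α • B) ^ k
      = U * diagonal (fun i => φ i ^ k) * star U := by
    intro k
    induction k with
    | zero => simp [pow_zero, diagonal_one, hU']
    | succ k ih =>
      rw [pow_succ, ih, hA, s4_conj_mul hU]
      congr 1
  set ψ : Fin n → ℝ := fun i => ∑ t ∈ Finset.range T, φ i ^ t with hψdef
  have hψpos : ∀ i, 0 < ψ i := fun i =>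
    Finset.sum_pos (fun t _ => pow_pos (hφpos i) t) (by simp [Finset.nonempty_range_iff]; omega)
  have hCspec : C = U * diagonal ψ * star U := by
    rw [hC]
    have : ∀ t ∈ Finset.range T, ((1 : Matrix (Fin n) (Fin n) ℝ) - α • B) ^ t
        = U * diagonal (fun i => φ i ^ t) * star U := fun t _ => hApow t
    rw [Finset.sum_congr rfl this]
    have hdiag : diagonal ψ = ∑ t ∈ Finset.range T, diagonal (fun i => φ i ^ t) := by
      ext i j
      rw [Matrix.sum_apply]
      by_cases h : i = j <;> simp [Matrix.diagonal_apply, h, hψdef]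
    rw [hdiag, Finset.mul_sum, Finset.sum_mul]
  have hCinv : C⁻¹ = U * diagonal (fun i => (ψ i)⁻¹) * star U := by
    apply Matrix.inv_eq_right_inv
    rw [hCspec, s4_conj_mul hU]
    have : (fun i => ψ i * (ψ i)⁻¹) = fun _ => (1:ℝ) := by
      funext i; exact mul_inv_cancel₀ (hψpos i).ne'
    rw [this, diagonal_one, mul_one, hU']
  set f : Fin n → ℝ := fun i => (ψ i)⁻¹ * φ i ^ T with hfdef
  have hMspec : M = U * diagonal f * star U := by
    rw [hM, hCinv, hApow T, s4_conj_mul hU]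
  have hfpos : ∀ i, 0 < f i := fun i =>
    mul_pos (inv_pos.mpr (hψpos i)) (pow_pos (hφpos i) T)
  have hfval : ∀ i, f i = φ i ^ T / (∑ t ∈ Finset.range T, φ i ^ t) := fun i => by
    show (ψ i)⁻¹ * φ i ^ T = _
    rw [inv_mul_eq_div]
  refine ⟨hMspec ▸ s4_conj_posDef hU hU' hfpos, ?_⟩
  intro lam v hv hMv
  -- extract eigenvalue
  set w := star U *ᵥ v with hw
  have hwv : U *ᵥ w = v := by rw [hw, mulVec_mulVec, hU', one_mulVec]
  have hwne : w ≠ 0 := fun h => hv (by rw [← hwv, h, mulVec_zero])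
  have hdiagw : diagonal f *ᵥ w = lam • w := by
    have h1 : M *ᵥ v = U *ᵥ (diagonal f *ᵥ w) := by
      rw [hMspec, ← mulVec_mulVec, ← mulVec_mulVec]
    have h2 : star U *ᵥ (M *ᵥ v) = diagonal f *ᵥ w := by
      rw [h1, mulVec_mulVec, hU, one_mulVec]
    rw [← h2, hMv, mulVec_smul]
  obtain ⟨i, hi⟩ := Function.ne_iff.mp hwne
  have hlam : lam = f i := by
    have h := congrFun hdiagw i
    rw [mulVec_diagonal] at h
    simp only [Pi.smul_apply, smul_eq_mul] at h
    exact (mul_right_cancel₀ hi h).symm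
  rw [hlam, hfval i]
  constructor
  · exact mono_aux T hT hx0 (by simp only [hφdef]; have := hdρ i; nlinarith)
  · have h1 : φ i ^ T / (∑ t ∈ Finset.range T, φ i ^ t)
        ≤ (1:ℝ) ^ T / (∑ t ∈ Finset.range T, (1:ℝ) ^ t) :=
      mono_aux T hT (hφpos i) (hφle1 i)
    simpa using h1
end

section
/- Let B be symmetric positive semi-definite, α > 0 with αρ(B) < 1, and T ≥ 1. Define C = Σ_{t=0}^{T−1}(I − αB)^t, M = C^{-1}(I − αB)^T, and N = (1/α)(C^{-1} − M). Then N is symmetric positive semi-definite. -/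
open Matrix Finset

theorem rayleigh (n : ℕ) (B : Matrix (Fin n) (Fin n) ℝ) (hH : B.IsHermitian) (ρ : ℝ)
    (hev : ∀ i, hH.eigenvalues i ≤ ρ) (v : Fin n → ℝ) :
    v ⬝ᵥ B *ᵥ v ≤ ρ * (v ⬝ᵥ v) := by
  have hst := hH.spectral_theorem
  set U : Matrix (Fin n) (Fin n) ℝ := (hH.eigenvectorUnitary : Matrix (Fin n) (Fin n) ℝ) with hU
  set D : Matrix (Fin n) (Fin n) ℝ := diagonal (RCLike.ofReal ∘ hH.eigenvalues) with hD
  have hUT : star U = Uᵀ := by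
    ext i j; simp [star_eq_conjTranspose, conjTranspose_apply]
  set w : Fin n → ℝ := star U *ᵥ v with hw
  have hvv : v ⬝ᵥ v = w ⬝ᵥ w := by
    rw [hw, hUT, mulVec_transpose, ← dotProduct_mulVec, ← mulVec_transpose, mulVec_mulVec,
      ← hUT]
    have h1 : U * star U = 1 := by
      have := hH.eigenvectorUnitary.2.2
      exact_mod_cast this
    rw [h1, one_mulVec]
  have hBv : v ⬝ᵥ B *ᵥ v = w ⬝ᵥ D *ᵥ w := by
    rw [hst, Unitary.conjStarAlgAut_apply, ← mulVec_mulVec, ← mulVec_mulVec, dotProduct_mulVec, ← mulVec_transpose, ← hUT,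
      ← hw]
  rw [hBv, hvv]
  have hdot : w ⬝ᵥ D *ᵥ w = ∑ i, hH.eigenvalues i * (w i * w i) := by
    rw [hD]
    simp [dotProduct, mulVec_diagonal]
    apply Finset.sum_congr rfl
    intro i _
    ring
  rw [hdot, dotProduct, Finset.mul_sum]
  apply Finset.sum_le_sum
  intro i _
  exact mul_le_mul_of_nonneg_right (hev i) (mul_self_nonneg _)

theorem stmt_5 (n : ℕ) (B : Matrix (Fin n) (Fin n) ℝ) (hB : B.PosSemidef)
    (ρ : ℝ) (hρ : IsGreatest {μ : ℝ | ∃ v : Fin n → ℝ, v ≠ 0 ∧ B.mulVec v = μ • v} ρ)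
    (α : ℝ) (hα : 0 < α) (hαρ : α * ρ < 1) (T : ℕ) (hT : 1 ≤ T)
    (C M N : Matrix (Fin n) (Fin n) ℝ)
    (hC : C = ∑ t ∈ Finset.range T, ((1 : Matrix (Fin n) (Fin n) ℝ) - α • B) ^ t)
    (hM : M = C⁻¹ * ((1 : Matrix (Fin n) (Fin n) ℝ) - α • B) ^ T)
    (hN : N = (1 / α) • (C⁻¹ - M)) :
    N.PosSemidef := by
  have hH : B.IsHermitian := hB.1
  -- eigenvalues are bounded by ρ
  have hev : ∀ i, hH.eigenvalues i ≤ ρ := by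
    intro i
    apply hρ.2
    refine ⟨hH.eigenvectorBasis i, ?_, ?_⟩
    · have h0 := hH.eigenvectorBasis.orthonormal.ne_zero i
      intro h
      exact h0 (by ext j; exact congrFun h j)
    · exact hH.mulVec_eigenvectorBasis i
  set A : Matrix (Fin n) (Fin n) ℝ := 1 - α • B with hA
  -- A is positive definite
  have hApos : A.PosDef := by
    rw [posDef_iff_dotProduct_mulVec]
    constructor
    · refine isHermitian_one.sub ?_
      show (α • B)ᴴ = α • B
      rw [conjTranspose_smul, hH.eq]
      simp
    · intro x hx
      have hxx : 0 < x ⬝ᵥ x := by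
        simpa using dotProduct_star_self_pos_iff.mpr hx
      have hray := rayleigh n B hH ρ hev x
      have : star x ⬝ᵥ (A *ᵥ x) = x ⬝ᵥ x - α * (x ⬝ᵥ B *ᵥ x) := by
        rw [hA]
        simp [sub_mulVec, smul_mulVec, dotProduct_sub, dotProduct_smul, smul_eq_mul]
      rw [this]
      have h1 : α * (x ⬝ᵥ B *ᵥ x) ≤ α * (ρ * (x ⬝ᵥ x)) :=
        mul_le_mul_of_nonneg_left hray hα.le
      have h2 : α * ρ * (x ⬝ᵥ x) < 1 * (x ⬝ᵥ x) :=
        mul_lt_mul_of_pos_right hαρ hxx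
      nlinarith
  -- C is positive definite
  have hCpos : C.PosDef := by
    obtain ⟨T', rfl⟩ : ∃ T', T = T' + 1 := ⟨T - 1, (Nat.succ_pred_eq_of_pos hT).symm⟩
    rw [hC, Finset.sum_range_succ']
    have hS : (∑ t ∈ Finset.range T', A ^ (t + 1)).PosSemidef := by
      apply Finset.sum_induction
      · exact fun a b ha hb => ha.add hb
      · exact Matrix.PosSemidef.zero
      · exact fun i _ => (hApos.posSemidef).pow (i + 1)
    simpa using Matrix.PosDef.posSemidef_add hS Matrix.PosDef.one
  have hCdet : IsUnit C.det := isUnit_iff_ne_zero.2 hCpos.det_pos.ne'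
  -- geometric sum identity
  have hgeom : C * (α • B) = 1 - A ^ T := by
    have := geom_sum_mul A T
    rw [← hC] at this
    have hab : A - 1 = -(α • B) := by rw [hA]; abel
    rw [hab, mul_neg] at this
    have := congrArg Neg.neg this
    rw [neg_neg] at this
    rw [this, neg_sub]
  have hNB : N = B := by
    have hCM : C⁻¹ - M = α • B := by
      rw [hM, ← mul_one C⁻¹, mul_assoc, ← mul_sub, one_mul, ← hgeom, ← mul_assoc,
        nonsing_inv_mul C hCdet, one_mul]
    rw [hN, hCM, smul_smul, one_div_mul_cancel hα.ne', one_smul]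
  rw [hNB]; exact hB
end

section
/- Let B be symmetric PSD, 0 < αρ(B) < 1, C = Σ_{t=0}^{T−1}(I−αB)^t, M = C^{-1}(I−αB)^T, λ update λ^{k+1} = λ^k + βAx^{k+1}, and one FlexPD-C iteration x^{k+1} = (I−αB)^T x^k − αC∇f(x^k) − αCA'λ^k. If (x*, λ*) is a fixed point of this iteration, then with N = (1/α)(C^{-1} − M): α(∇f(x^k) − ∇f(x*)) = M(x^k − x^{k+1}) + α(βA'A − N)(x^{k+1} − x*) − αA'(λ^{k+1} − λ*). -/
open Matrix

theorem stmt_18 (n ε : ℕ) (gradf : (Fin n → ℝ) → (Fin n → ℝ))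
    (A : Matrix (Fin ε) (Fin n) ℝ) (B : Matrix (Fin n) (Fin n) ℝ)
    (hB : B.PosSemidef)
    (ρ : ℝ) (hρ : IsGreatest {μ : ℝ | ∃ v : Fin n → ℝ, v ≠ 0 ∧ B.mulVec v = μ • v} ρ)
    (α β : ℝ) (hα : 0 < α) (hβ : 0 < β) (hαρ : α * ρ < 1) (T : ℕ) (hT : 1 ≤ T)
    (C M N : Matrix (Fin n) (Fin n) ℝ)
    (hC : C = ∑ t ∈ Finset.range T, ((1 : Matrix (Fin n) (Fin n) ℝ) - α • B) ^ t)
    (hCunit : IsUnit C)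
    (hM : M = C⁻¹ * ((1 : Matrix (Fin n) (Fin n) ℝ) - α • B) ^ T)
    (hN : N = (1 / α) • (C⁻¹ - M))
    (xk x1 : Fin n → ℝ) (lamk lam1 : Fin ε → ℝ)
    (hx : x1 = (((1 : Matrix (Fin n) (Fin n) ℝ) - α • B) ^ T).mulVec xk
      - α • C.mulVec (gradf xk) - α • (C * Aᵀ).mulVec lamk)
    (hlam : lam1 = lamk + β • A.mulVec x1)
    (xstar : Fin n → ℝ) (lamstar : Fin ε → ℝ)
    (hfix : xstar = (((1 : Matrix (Fin n) (Fin n) ℝ) - α • B) ^ T).mulVec xstar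
      - α • C.mulVec (gradf xstar) - α • (C * Aᵀ).mulVec lamstar)
    (hAx : A.mulVec xstar = 0) :
    α • (gradf xk - gradf xstar) =
      M.mulVec (xk - x1) + α • ((β • (Aᵀ * A) - N).mulVec (x1 - xstar))
        - α • Aᵀ.mulVec (lam1 - lamstar) := by
  have hdet : IsUnit C.det := (Matrix.isUnit_iff_isUnit_det C).mp hCunit
  have hCi : C⁻¹ * C = 1 := Matrix.nonsing_inv_mul C hdet
  set P : Matrix (Fin n) (Fin n) ℝ := ((1 : Matrix (Fin n) (Fin n) ℝ) - α • B) ^ T with hP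
  -- key equation for a generic iterate
  have key : ∀ (x y : Fin n → ℝ) (lam : Fin ε → ℝ),
      y = P.mulVec x - α • C.mulVec (gradf x) - α • (C * Aᵀ).mulVec lam →
      α • gradf x = M.mulVec x - C⁻¹.mulVec y - α • Aᵀ.mulVec lam := by
    intro x y lam h
    have h1 : α • C.mulVec (gradf x) = P.mulVec x - y - α • (C * Aᵀ).mulVec lam := by
      rw [h]; module
    have h2 := congrArg (fun v => C⁻¹.mulVec v) h1
    simpa [Matrix.mulVec_smul, Matrix.mulVec_sub, Matrix.mulVec_mulVec, hCi,
      Matrix.one_mulVec, ← Matrix.mul_assoc, hM] using h2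
  have hk := key xk x1 lamk hx
  have hs := key xstar xstar lamstar hfix
  have hαN : ∀ v : Fin n → ℝ, α • N.mulVec v = C⁻¹.mulVec v - M.mulVec v := by
    intro v
    rw [hN, Matrix.smul_mulVec, smul_smul, mul_one_div_cancel hα.ne', one_smul,
      Matrix.sub_mulVec]
  have hlam' : Aᵀ.mulVec (lam1 - lamstar)
      = Aᵀ.mulVec lamk + β • Aᵀ.mulVec (A.mulVec x1) - Aᵀ.mulVec lamstar := by
    rw [hlam]; rw [Matrix.mulVec_sub, Matrix.mulVec_add, Matrix.mulVec_smul]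
  have hAA : (Aᵀ * A).mulVec (x1 - xstar) = Aᵀ.mulVec (A.mulVec x1) := by
    rw [← Matrix.mulVec_mulVec, Matrix.mulVec_sub, hAx, sub_zero]
  have expand : α • ((β • (Aᵀ * A) - N).mulVec (x1 - xstar))
      = (α * β) • Aᵀ.mulVec (A.mulVec x1)
        - (C⁻¹.mulVec (x1 - xstar) - M.mulVec (x1 - xstar)) := by
    rw [Matrix.sub_mulVec, Matrix.smul_mulVec, smul_sub, smul_smul, hAA, hαN]
  rw [expand, hlam', smul_sub, hk, hs]
  simp only [Matrix.mulVec_sub]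
  module
end
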